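/- (Constant Rank theorem, Janin's version with C² curve) Let x* ∈ Ω and d ∈ C(x*), and let E := {j ∈ A(x*) : ∇g_j(x*)ᵀd = 0}. If the family {∇h_i(x), i = 1,…,m; ∇g_j(x), j ∈ E} has constant rank for all x in a neighborhood of x*, then there exist ε > 0 and a twice continuously differentiable curve ξ : (−ε,ε) → ℝⁿ such that ξ(0) = x*, ξ'(0) = d, h_i(ξ(t)) = 0 for all i and g_j(ξ(t)) = 0 for all j ∈ E whenever t ∈ (−ε,ε), and g_j(ξ(t)) ≤ 0 for all j = 1,…,p whenever t ∈ [0,ε). -/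

import Mathlib

open scoped BigOperators Pointwise
open Matrix

attribute [local instance] Classical.propDecidable

noncomputable section

/-- The gradient vector of `φ` at `x` (the vector of partial derivatives). -/
def gradVec {n : ℕ} (φ : (Fin n → ℝ) → ℝ) (x : Fin n → ℝ) : Fin n → ℝ :=
  fun k => fderiv ℝ φ x (Pi.single k 1)

/-- The quadratic form `d ↦ dᵀ ∇²φ(x) d` of the Hessian of `φ` at `x`. -/
def hessQ {n : ℕ} (φ : (Fin n → ℝ) → ℝ) (x d : Fin n → ℝ) : ℝ :=
  iteratedFDeriv ℝ 2 φ x ![d, d]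

/-- Feasibility for the problem (NLP). -/
def Feas {n m p : ℕ} (h : Fin m → (Fin n → ℝ) → ℝ) (g : Fin p → (Fin n → ℝ) → ℝ)
    (x : Fin n → ℝ) : Prop :=
  (∀ i, h i x = 0) ∧ ∀ j, g j x ≤ 0

/-- The Lagrangian of (NLP). -/
def Lagr {n m p : ℕ} (f : (Fin n → ℝ) → ℝ) (h : Fin m → (Fin n → ℝ) → ℝ)
    (g : Fin p → (Fin n → ℝ) → ℝ) (lam : Fin m → ℝ) (mu : Fin p → ℝ) (x : Fin n → ℝ) : ℝ :=
  f x + ∑ i, lam i * h i x + ∑ j, mu j * g j x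

/-- `(lam, mu)` is a Lagrange multiplier at `xs`, i.e. `(lam, mu) ∈ Λ(xs)`. -/
def IsLagMult {n m p : ℕ} (f : (Fin n → ℝ) → ℝ) (h : Fin m → (Fin n → ℝ) → ℝ)
    (g : Fin p → (Fin n → ℝ) → ℝ) (xs : Fin n → ℝ) (lam : Fin m → ℝ) (mu : Fin p → ℝ) : Prop :=
  (∀ j, 0 ≤ mu j) ∧ fderiv ℝ (Lagr f h g lam mu) xs = 0 ∧ ∀ j, mu j * g j xs = 0

/-- The Mangasarian-Fromovitz constraint qualification at `xs`. -/
def MFCQ {n m p : ℕ} (h : Fin m → (Fin n → ℝ) → ℝ) (g : Fin p → (Fin n → ℝ) → ℝ)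
    (xs : Fin n → ℝ) : Prop :=
  LinearIndependent ℝ (fun i : Fin m => fderiv ℝ (h i) xs) ∧
  ∃ d : Fin n → ℝ, (∀ i, fderiv ℝ (h i) xs d = 0) ∧
    ∀ j, g j xs = 0 → fderiv ℝ (g j) xs d < 0

/-- Membership in the critical cone `C(xs)`. -/
def critCone {n m p : ℕ} (f : (Fin n → ℝ) → ℝ) (h : Fin m → (Fin n → ℝ) → ℝ)
    (g : Fin p → (Fin n → ℝ) → ℝ) (xs d : Fin n → ℝ) : Prop :=
  fderiv ℝ f xs d = 0 ∧ (∀ i, fderiv ℝ (h i) xs d = 0) ∧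
    ∀ j, g j xs = 0 → fderiv ℝ (g j) xs d ≤ 0

/-- Membership in the critical subspace `S(xs)`. -/
def critSub {n m p : ℕ} (h : Fin m → (Fin n → ℝ) → ℝ) (g : Fin p → (Fin n → ℝ) → ℝ)
    (xs d : Fin n → ℝ) : Prop :=
  (∀ i, fderiv ℝ (h i) xs d = 0) ∧ ∀ j, g j xs = 0 → fderiv ℝ (g j) xs d = 0

/-- The Jacobian matrix `J(x)` of equality and active inequality constraints
(activity taken at the base point `xs`). -/
def Jac {n m p : ℕ} (h : Fin m → (Fin n → ℝ) → ℝ) (g : Fin p → (Fin n → ℝ) → ℝ)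
    (xs x : Fin n → ℝ) : Matrix (Fin m ⊕ {j : Fin p // g j xs = 0}) (Fin n) ℝ :=
  Matrix.of fun i k =>
    Sum.elim (fun i' => fderiv ℝ (h i') x (Pi.single k 1))
      (fun j' => fderiv ℝ (g j'.1) x (Pi.single k 1)) i

/-- A first-order cone: the (direct) sum of a linear subspace and a ray. -/
def IsFirstOrderCone {n : ℕ} (K : Set (Fin n → ℝ)) : Prop :=
  ∃ (W : Submodule ℝ (Fin n → ℝ)) (d0 : Fin n → ℝ),
    K = {x | ∃ w ∈ W, ∃ r : ℝ, 0 ≤ r ∧ x = w + r • d0}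

/-- The rank of a family of vectors: the dimension of its linear span. -/
def famRank {ι : Type*} {n : ℕ} (v : ι → (Fin n → ℝ)) : ℕ :=
  Module.finrank ℝ (Submodule.span ℝ (Set.range v))


lemma clm_apply_eq_sum {n : ℕ} (L : (Fin n → ℝ) →L[ℝ] ℝ) (u : Fin n → ℝ) :
    L u = ∑ k, u k * L (Pi.single k 1) := by
  conv_lhs => rw [pi_eq_sum_univ u]
  rw [map_sum]
  congr 1; ext k
  rw [ContinuousLinearMap.map_smul, smul_eq_mul]
  congr 2
  funext j
  simp [Pi.single_apply, eq_comm]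

lemma fderiv_apply_eq_sum {n : ℕ} (φ : (Fin n → ℝ) → ℝ) (x u : Fin n → ℝ) :
    fderiv ℝ φ x u = ∑ k, u k * gradVec φ x k :=
  clm_apply_eq_sum _ u

set_option maxHeartbeats 1600000 in
/-- Constant Rank theorem, Janin's version with a C² curve. -/
theorem stmt6 {n m p : ℕ} (f : (Fin n → ℝ) → ℝ) (h : Fin m → (Fin n → ℝ) → ℝ)
    (g : Fin p → (Fin n → ℝ) → ℝ)
    (hf : ContDiff ℝ 2 f) (hh : ∀ i, ContDiff ℝ 2 (h i)) (hg : ∀ j, ContDiff ℝ 2 (g j))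
    (xs : Fin n → ℝ) (hfeas : Feas h g xs)
    (d : Fin n → ℝ) (hd : critCone f h g xs d)
    (hrank : ∃ U ∈ nhds xs, ∀ x ∈ U,
      famRank (Sum.elim (fun i : Fin m => gradVec (h i) x)
        (fun j : {j : Fin p // g j xs = 0 ∧ fderiv ℝ (g j) xs d = 0} => gradVec (g j.1) x)) =
      famRank (Sum.elim (fun i : Fin m => gradVec (h i) xs)
        (fun j : {j : Fin p // g j xs = 0 ∧ fderiv ℝ (g j) xs d = 0} => gradVec (g j.1) xs))) :
    ∃ ε > (0 : ℝ), ∃ ξ : ℝ → (Fin n → ℝ),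
      ContDiffOn ℝ 2 ξ (Set.Ioo (-ε) ε) ∧ ξ 0 = xs ∧ deriv ξ 0 = d ∧
      (∀ t ∈ Set.Ioo (-ε) ε, (∀ i, h i (ξ t) = 0) ∧
        ∀ j : Fin p, g j xs = 0 → fderiv ℝ (g j) xs d = 0 → g j (ξ t) = 0) ∧
      (∀ t ∈ Set.Ico (0 : ℝ) ε, ∀ j, g j (ξ t) ≤ 0) := by
  classical
  obtain ⟨U, hU, hUrank⟩ := hrank
  obtain ⟨hfeas_h, hfeas_g⟩ := hfeas
  obtain ⟨-, hdh, hdg⟩ := hd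
  set c : (Fin m ⊕ {j : Fin p // g j xs = 0 ∧ fderiv ℝ (g j) xs d = 0}) → (Fin n → ℝ) → ℝ :=
    Sum.elim h (fun j => g j.1) with hc_def
  have hc : ∀ i, ContDiff ℝ 2 (c i) := by rintro (i | j); exacts [hh i, hg j.1]
  have hc0 : ∀ i, c i xs = 0 := by rintro (i | j); exacts [hfeas_h i, j.2.1]
  have hcd : ∀ i, fderiv ℝ (c i) xs d = 0 := by rintro (i | j); exacts [hdh i, j.2.2]
  set v : (Fin n → ℝ) → (Fin m ⊕ {j : Fin p // g j xs = 0 ∧ fderiv ℝ (g j) xs d = 0}) →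
      (Fin n → ℝ) := fun x i => gradVec (c i) x with hv_def
  have hrank' : ∀ x ∈ U, famRank (v x) = famRank (v xs) := by
    intro x hx
    have e1 : ∀ y, v y = Sum.elim (fun i : Fin m => gradVec (h i) y)
        (fun j : {j : Fin p // g j xs = 0 ∧ fderiv ℝ (g j) xs d = 0} => gradVec (g j.1) y) := by
      intro y; funext i; cases i <;> rfl
    rw [e1 x, e1 xs]; exact hUrank x hx
  -- pick a maximal linearly independent subfamily at `xs`
  obtain ⟨bs, hbs, hbspan, hbind⟩ := exists_linearIndependent ℝ (Set.range (v xs))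
  have hbfin : bs.Finite := (Set.finite_range (v xs)).subset hbs
  haveI : Fintype bs := hbfin.fintype
  have hpick : ∀ w : bs, ∃ i, v xs i = (w : Fin n → ℝ) := fun w => hbs w.2
  choose idx hidx using hpick
  have hind0 : LinearIndependent ℝ (fun w : bs => v xs (idx w)) := by
    have e2 : (fun w : bs => v xs (idx w)) = (fun w : bs => (w : Fin n → ℝ)) :=
      funext fun w => hidx w
    rw [e2]; exact hbind
  have hrank_xs : famRank (v xs) = Fintype.card bs := by
    have e3 : famRank (v xs) = Module.finrank ℝ (Submodule.span ℝ bs) := by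
      rw [famRank, hbspan]
    rw [e3, finrank_span_set_eq_card hbind, Set.toFinset_card]
  -- continuity of the gradients
  have hvcont : ∀ i, Continuous (fun x => v x i) := by
    intro i
    have h1 : Continuous (fun x => fderiv ℝ (c i) x) := (hc i).continuous_fderiv two_ne_zero
    exact continuous_pi fun k => h1.clm_apply continuous_const
  -- the set where the chosen subfamily stays independent
  set U1 : Set (Fin n → ℝ) :=
    (fun x => fun w : bs => v x (idx w)) ⁻¹' {q | LinearIndependent ℝ q} with hU1_def
  have hU1open : IsOpen U1 :=
    isOpen_setOf_linearIndependent.preimage (continuous_pi fun w => hvcont (idx w))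
  have hxsU1 : xs ∈ U1 := hind0
  -- the span property near `xs`
  have hspanx : ∀ x, x ∈ U → x ∈ U1 → ∀ i,
      v x i ∈ Submodule.span ℝ (Set.range fun w : bs => v x (idx w)) := by
    intro x hxU hxU1 i
    have hindx : LinearIndependent ℝ (fun w : bs => v x (idx w)) := hxU1
    have hle : Submodule.span ℝ (Set.range fun w : bs => v x (idx w)) ≤
        Submodule.span ℝ (Set.range (v x)) :=
      Submodule.span_mono (by rintro _ ⟨w, rfl⟩; exact ⟨idx w, rfl⟩)
    have hcard1 : Module.finrank ℝ
        (Submodule.span ℝ (Set.range fun w : bs => v x (idx w))) = Fintype.card bs :=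
      finrank_span_eq_card hindx
    have hcard2 : Module.finrank ℝ (Submodule.span ℝ (Set.range (v x))) = Fintype.card bs := by
      have : famRank (v x) = Fintype.card bs := by rw [hrank' x hxU, hrank_xs]
      exact this
    have heq : Submodule.span ℝ (Set.range fun w : bs => v x (idx w)) =
        Submodule.span ℝ (Set.range (v x)) :=
      Submodule.eq_of_le_of_finrank_le hle (by rw [hcard1, hcard2])
    rw [heq]
    exact Submodule.subset_span ⟨i, rfl⟩
  -- the linearization
  set A : (Fin n → ℝ) →L[ℝ] (bs → ℝ) :=
    ContinuousLinearMap.pi (fun w : bs => fderiv ℝ (c (idx w)) xs) with hA_def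
  set Kk : Submodule ℝ (Fin n → ℝ) := LinearMap.ker (A : (Fin n → ℝ) →ₗ[ℝ] (bs → ℝ)) with hKk_def
  have hdK : d ∈ Kk := by
    rw [hKk_def, LinearMap.mem_ker]
    ext w
    simpa [hA_def] using hcd (idx w)
  -- A is surjective
  have hAeq : (A : (Fin n → ℝ) →ₗ[ℝ] (bs → ℝ)) =
      (Matrix.of (fun w : bs => v xs (idx w))).mulVecLin := by
    apply LinearMap.ext; intro u; funext w
    have : fderiv ℝ (c (idx w)) xs u = ∑ k, u k * gradVec (c (idx w)) xs k :=
      fderiv_apply_eq_sum _ _ _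
    simp only [ContinuousLinearMap.coe_coe, hA_def, ContinuousLinearMap.pi_apply,
      Matrix.mulVecLin_apply, Matrix.mulVec, dotProduct, Matrix.of_apply]
    rw [this]
    exact Finset.sum_congr rfl fun k _ => mul_comm _ _
  have hAtop : LinearMap.range (A : (Fin n → ℝ) →ₗ[ℝ] (bs → ℝ)) = ⊤ := by
    apply Submodule.eq_top_of_finrank_eq
    rw [hAeq]
    have hrk : (Matrix.of (fun w : bs => v xs (idx w))).rank = Fintype.card bs :=
      LinearIndependent.rank_matrix hind0
    rw [show Module.finrank ℝ (LinearMap.range (Matrix.of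
        (fun w : bs => v xs (idx w))).mulVecLin) = (Matrix.of
        (fun w : bs => v xs (idx w))).rank from rfl, hrk,
      Module.finrank_fintype_fun_eq_card]
  have hdims : Fintype.card bs + Module.finrank ℝ Kk = n := by
    have h1 := LinearMap.finrank_range_add_finrank_ker (A : (Fin n → ℝ) →ₗ[ℝ] (bs → ℝ))
    rw [hAtop] at h1
    simpa [Module.finrank_fintype_fun_eq_card, Module.finrank_fin_fun, hKk_def] using h1
  -- projection onto the kernel
  obtain ⟨W, hW⟩ := Submodule.exists_isCompl Kk
  set pr : (Fin n → ℝ) →ₗ[ℝ] Kk := Kk.linearProjOfIsCompl W hW with hpr_def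
  set prL : (Fin n → ℝ) →L[ℝ] Kk := LinearMap.toContinuousLinearMap pr with hprL_def
  set B : (Fin n → ℝ) →L[ℝ] ((bs → ℝ) × Kk) := A.prod prL with hB_def
  have hBinj : Function.Injective B := by
    intro a b hab
    have hsub : B (a - b) = 0 := by rw [map_sub, hab, sub_self]
    have h1 : A (a - b) = 0 := congrArg Prod.fst hsub
    have h2 : prL (a - b) = 0 := congrArg Prod.snd hsub
    have hmem : a - b ∈ Kk := by rw [hKk_def, LinearMap.mem_ker]; exact h1
    have h3 : pr (a - b) = (⟨a - b, hmem⟩ : Kk) :=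
      Submodule.linearProjOfIsCompl_apply_left hW ⟨a - b, hmem⟩
    have h4 : prL (a - b) = pr (a - b) := rfl
    rw [h4, h3] at h2
    have h5 : a - b = 0 := congrArg Subtype.val h2
    exact sub_eq_zero.mp h5
  haveI : FiniteDimensional ℝ Kk := inferInstance
  have hfr_eq : Module.finrank ℝ (Fin n → ℝ) = Module.finrank ℝ ((bs → ℝ) × Kk) := by
    have e1 : Module.finrank ℝ (Fin n → ℝ) = n := by simp
    have e2 : Module.finrank ℝ ((bs → ℝ) × Kk) = Fintype.card bs + Module.finrank ℝ Kk := by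
      rw [Module.finrank_prod, Module.finrank_fintype_fun_eq_card]
    rw [e1, e2, hdims]
  have hBinj' : Function.Injective (B : (Fin n → ℝ) →ₗ[ℝ] ((bs → ℝ) × Kk)) := hBinj
  have hBbij : Function.Bijective (B : (Fin n → ℝ) →ₗ[ℝ] ((bs → ℝ) × Kk)) :=
    ⟨hBinj', (LinearMap.injective_iff_surjective_of_finrank_eq_finrank hfr_eq).mp hBinj'⟩
  set Beq : (Fin n → ℝ) ≃L[ℝ] ((bs → ℝ) × Kk) :=
    LinearEquiv.toContinuousLinearEquiv (LinearEquiv.ofBijective _ hBbij) with hBeq_def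
  have hBeq_coe : (Beq : (Fin n → ℝ) →L[ℝ] ((bs → ℝ) × Kk)) = B := by
    apply ContinuousLinearMap.ext; intro u; rfl
  -- the local chart
  set F : (Fin n → ℝ) → ((bs → ℝ) × Kk) := fun x => (fun w => c (idx w) x, prL (x - xs))
    with hF_def
  have hFc : ContDiff ℝ 2 F := by
    apply ContDiff.prodMk
    · exact contDiff_pi.mpr fun w => hc (idx w)
    · exact prL.contDiff.comp (contDiff_id.sub contDiff_const)
  have hFd : HasFDerivAt F (Beq : (Fin n → ℝ) →L[ℝ] ((bs → ℝ) × Kk)) xs := by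
    rw [hBeq_coe, hB_def]
    apply HasFDerivAt.prodMk
    · exact hasFDerivAt_pi.mpr fun w =>
        (((hc (idx w)).differentiable two_ne_zero) xs).hasFDerivAt
    · have h1 : HasFDerivAt (fun x : Fin n → ℝ => x - xs)
          (ContinuousLinearMap.id ℝ (Fin n → ℝ)) xs := (hasFDerivAt_id xs).sub_const xs
      have h2 : HasFDerivAt (fun x : Fin n → ℝ => prL (x - xs))
          (prL.comp (ContinuousLinearMap.id ℝ (Fin n → ℝ))) xs := prL.hasFDerivAt.comp xs h1
      simpa only [ContinuousLinearMap.comp_id] using h2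
  have hFxs : F xs = (0, 0) := by
    rw [hF_def]
    refine Prod.ext ?_ ?_
    · funext w; exact hc0 (idx w)
    · simp
  have hstrict : HasStrictFDerivAt F (Beq : (Fin n → ℝ) →L[ℝ] ((bs → ℝ) × Kk)) xs :=
    hFc.contDiffAt.hasStrictFDerivAt' hFd two_ne_zero
  set G : ((bs → ℝ) × Kk) → (Fin n → ℝ) := hstrict.localInverse F _ _ with hG_def
  have hGc : ContDiffAt ℝ 2 G (F xs) := hFc.contDiffAt.to_localInverse hFd two_ne_zero
  have hGx : G (F xs) = xs := hstrict.localInverse_apply_image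
  have hGinv : ∀ᶠ y in nhds (F xs), F (G y) = y := hstrict.eventually_right_inverse
  have hGd : HasFDerivAt G ((Beq.symm : ((bs → ℝ) × Kk) →L[ℝ] (Fin n → ℝ))) (F xs) :=
    hstrict.to_localInverse.hasFDerivAt
  -- the curve
  set dK : Kk := ⟨d, hdK⟩ with hdK_def
  set γ : ℝ → ((bs → ℝ) × Kk) := fun t => ((0 : bs → ℝ), t • dK) with hγ_def
  have hγ0 : γ 0 = F xs := by rw [hFxs, hγ_def]; simp
  have hγc : ContDiff ℝ 2 γ := contDiff_const.prodMk (contDiff_id.smul contDiff_const)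
  set ξ : ℝ → (Fin n → ℝ) := fun t => G (γ t) with hξ_def
  have hξ0 : ξ 0 = xs := by rw [hξ_def]; simp only [hγ0]; exact hGx
  have hξc : ContDiffAt ℝ 2 ξ 0 := by
    have := hγ0 ▸ hGc
    exact this.comp 0 hγc.contDiffAt
  -- derivative of the curve at 0
  have hγd : HasDerivAt γ ((0 : bs → ℝ), dK) 0 := by
    have h2 : HasDerivAt (fun t : ℝ => t • dK) dK 0 := by
      simpa using (hasDerivAt_id (0 : ℝ)).smul_const dK
    exact (hasDerivAt_const (0 : ℝ) (0 : bs → ℝ)).prodMk h2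
  have hBd : Beq d = ((0 : bs → ℝ), dK) := by
    have h1 : Beq d = B d := by rw [← hBeq_coe]; rfl
    rw [h1, hB_def]
    refine Prod.ext ?_ ?_
    · have := hdK
      rw [hKk_def, LinearMap.mem_ker] at this
      exact this
    · show prL d = dK
      have h3 : pr ((dK : Fin n → ℝ)) = dK := Submodule.linearProjOfIsCompl_apply_left hW dK
      exact h3
  have hξd : HasDerivAt ξ d 0 := by
    have hGd' : HasFDerivAt G ((Beq.symm : ((bs → ℝ) × Kk) →L[ℝ] (Fin n → ℝ))) (γ 0) := by
      rw [hγ0]; exact hGd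
    have h4 := hGd'.comp_hasDerivAt 0 hγd
    have h5 : (Beq.symm : ((bs → ℝ) × Kk) →L[ℝ] (Fin n → ℝ)) ((0 : bs → ℝ), dK) = d := by
      have := Beq.symm_apply_apply d
      rw [hBd] at this
      exact this
    rw [h5] at h4
    exact h4
  have hξderiv : deriv ξ 0 = d := hξd.deriv
  -- eventual facts near t = 0
  have hξcont : ContinuousAt ξ 0 := hξc.continuousAt
  obtain ⟨u, hu_nhds, hucd⟩ := hξc.contDiffOn le_rfl (by norm_num)
  have ev_u : ∀ᶠ t in nhds (0 : ℝ), t ∈ u := hu_nhds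
  have ev1 : ∀ᶠ t in nhds (0 : ℝ), F (ξ t) = γ t := by
    have h1 : Filter.Tendsto γ (nhds 0) (nhds (F xs)) := by
      rw [← hγ0]; exact hγc.continuous.continuousAt
    exact h1.eventually hGinv
  have ev2 : ∀ᶠ t in nhds (0 : ℝ), ξ t ∈ U ∩ U1 := by
    apply hξcont.eventually_mem
    rw [hξ0]
    exact Filter.inter_mem hU (hU1open.mem_nhds hxsU1)
  have ev4 : ∀ᶠ t in nhds (0 : ℝ), ∀ j : Fin p, g j xs < 0 → g j (ξ t) < 0 := by
    rw [Filter.eventually_all]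
    intro j
    by_cases hj : g j xs < 0
    · have h1 : ContinuousAt (fun t => g j (ξ t)) 0 :=
        ((hg j).continuous.continuousAt).comp hξcont
      have h2 : g j (ξ 0) ∈ Set.Iio (0 : ℝ) := by rw [hξ0]; exact hj
      filter_upwards [h1.eventually_mem (isOpen_Iio.mem_nhds h2)] with t ht _
      exact ht
    · filter_upwards with t hj2; exact absurd hj2 hj
  obtain ⟨ε1, hε1pos, hball1⟩ :=
    Metric.eventually_nhds_iff_ball.mp ((ev_u.and ev1).and (ev2.and ev4))
  set I : Set ℝ := Set.Ioo (-ε1) ε1 with hI_def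
  have hI_open : IsOpen I := isOpen_Ioo
  have hI_mem : (0 : ℝ) ∈ I := by constructor <;> simp [hε1pos]
  have hI_ball : ∀ t ∈ I, t ∈ Metric.ball (0 : ℝ) ε1 := by
    intro t ht
    rw [Real.ball_eq_Ioo]; simpa [hI_def] using ht
  have hIu : ∀ t ∈ I, t ∈ u := fun t ht => ((hball1 t (hI_ball t ht)).1).1
  have hIF : ∀ t ∈ I, F (ξ t) = γ t := fun t ht => ((hball1 t (hI_ball t ht)).1).2
  have hIU : ∀ t ∈ I, ξ t ∈ U ∩ U1 := fun t ht => ((hball1 t (hI_ball t ht)).2).1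
  have hIneg : ∀ t ∈ I, ∀ j : Fin p, g j xs < 0 → g j (ξ t) < 0 :=
    fun t ht => ((hball1 t (hI_ball t ht)).2).2
  have hξI : ContDiffOn ℝ 2 ξ I := hucd.mono hIu
  have hξdiffI : ∀ t ∈ I, HasDerivAt ξ (deriv ξ t) t := by
    intro t ht
    have h1 : DifferentiableOn ℝ ξ I := hξI.differentiableOn two_ne_zero
    exact (h1.differentiableAt (hI_open.mem_nhds ht)).hasDerivAt
  -- vanishing of the selected constraints on I
  have hsel_zero : ∀ w : bs, ∀ t ∈ I, c (idx w) (ξ t) = 0 := by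
    intro w t ht
    have h2 : (fun w' : bs => c (idx w') (ξ t)) = (0 : bs → ℝ) := congrArg Prod.fst (hIF t ht)
    exact congrFun h2 w
  have hcomp_deriv : ∀ i, ∀ t ∈ I,
      HasDerivAt (fun s => c i (ξ s)) (fderiv ℝ (c i) (ξ t) (deriv ξ t)) t := by
    intro i t ht
    exact ((((hc i).differentiable two_ne_zero) (ξ t)).hasFDerivAt).comp_hasDerivAt t
      (hξdiffI t ht)
  have hsel_deriv0 : ∀ w : bs, ∀ t ∈ I, fderiv ℝ (c (idx w)) (ξ t) (deriv ξ t) = 0 := by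
    intro w t ht
    have hEq : (fun s => c (idx w) (ξ s)) =ᶠ[nhds t] (fun _ => (0 : ℝ)) := by
      filter_upwards [hI_open.mem_nhds ht] with s hs
      exact hsel_zero w s hs
    have h0 : HasDerivAt (fun s => c (idx w) (ξ s)) 0 t :=
      (hasDerivAt_const t (0 : ℝ)).congr_of_eventuallyEq hEq
    exact (hcomp_deriv (idx w) t ht).unique h0
  have hall_deriv0 : ∀ i, ∀ t ∈ I, fderiv ℝ (c i) (ξ t) (deriv ξ t) = 0 := by
    intro i t ht
    obtain ⟨hxU, hxU1⟩ := hIU t ht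
    have hmem := hspanx (ξ t) hxU hxU1 i
    obtain ⟨a, ha⟩ := (Submodule.mem_span_range_iff_exists_fun ℝ).mp hmem
    have hterm : ∀ w : bs, a w * fderiv ℝ (c (idx w)) (ξ t) (deriv ξ t)
        = ∑ k, deriv ξ t k * (a w * v (ξ t) (idx w) k) := by
      intro w
      rw [fderiv_apply_eq_sum, Finset.mul_sum]
      exact Finset.sum_congr rfl fun k _ => by
        show a w * (deriv ξ t k * gradVec (c (idx w)) (ξ t) k) = _
        ring
    have hsum : fderiv ℝ (c i) (ξ t) (deriv ξ t) =
        ∑ w : bs, a w * fderiv ℝ (c (idx w)) (ξ t) (deriv ξ t) := by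
      rw [fderiv_apply_eq_sum,
        show (∑ w : bs, a w * fderiv ℝ (c (idx w)) (ξ t) (deriv ξ t)) =
          ∑ w : bs, ∑ k, deriv ξ t k * (a w * v (ξ t) (idx w) k) from
          Finset.sum_congr rfl fun w _ => hterm w,
        Finset.sum_comm]
      apply Finset.sum_congr rfl; intro k _
      have h7 := congrFun ha k
      simp only [Finset.sum_apply, Pi.smul_apply, smul_eq_mul] at h7
      rw [show gradVec (c i) (ξ t) k = v (ξ t) i k from rfl, ← h7, Finset.mul_sum]
    rw [hsum]
    apply Finset.sum_eq_zero; intro w _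
    rw [hsel_deriv0 w t ht, mul_zero]
  have hzeroI : ∀ i, ∀ t ∈ I, c i (ξ t) = 0 := by
    intro i t ht
    have hdiff : DifferentiableOn ℝ (fun s => c i (ξ s)) I := fun s hs =>
      ((hcomp_deriv i s hs).differentiableAt).differentiableWithinAt
    have hfd0 : ∀ s ∈ I, fderivWithin ℝ (fun s' => c i (ξ s')) I s = 0 := by
      intro s hs
      rw [fderivWithin_of_isOpen hI_open hs]
      have h0 : HasDerivAt (fun s' => c i (ξ s')) 0 s := by
        have h1 := hcomp_deriv i s hs
        rwa [hall_deriv0 i s hs] at h1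
      rw [h0.hasFDerivAt.fderiv]
      ext z; simp [ContinuousLinearMap.smulRight_apply]
    have hconst : c i (ξ t) = c i (ξ 0) :=
      (convex_Ioo (-ε1) ε1).is_const_of_fderivWithin_eq_zero hdiff hfd0 ht hI_mem
    rw [hconst, hξ0]; exact hc0 i
  -- second shrinking: strict decrease of the remaining active constraints
  have hξcontI : ContinuousOn ξ I := hξI.continuousOn
  have hderivcont : ContinuousOn (deriv ξ) I :=
    hξI.continuousOn_deriv_of_isOpen hI_open one_le_two
  have ev5 : ∀ᶠ t in nhds (0 : ℝ), ∀ j : Fin p, g j xs = 0 → fderiv ℝ (g j) xs d < 0 →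
      fderiv ℝ (g j) (ξ t) (deriv ξ t) < 0 := by
    rw [Filter.eventually_all]
    intro j
    by_cases hj : g j xs = 0 ∧ fderiv ℝ (g j) xs d < 0
    · have h1 : Continuous (fderiv ℝ (g j)) := (hg j).continuous_fderiv two_ne_zero
      have hD : ContinuousOn (fun t => fderiv ℝ (g j) (ξ t) (deriv ξ t)) I :=
        (h1.comp_continuousOn hξcontI).clm_apply hderivcont
      have hDat : ContinuousAt (fun t => fderiv ℝ (g j) (ξ t) (deriv ξ t)) 0 :=
        hD.continuousAt (hI_open.mem_nhds hI_mem)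
      have hval : fderiv ℝ (g j) (ξ 0) (deriv ξ 0) ∈ Set.Iio (0 : ℝ) := by
        rw [hξ0, hξderiv]; exact hj.2
      filter_upwards [hDat.eventually_mem (isOpen_Iio.mem_nhds hval)] with t ht _ _
      exact ht
    · filter_upwards with t h1 h2
      exact absurd ⟨h1, h2⟩ hj
  have evI : ∀ᶠ t in nhds (0 : ℝ), t ∈ I := hI_open.mem_nhds hI_mem
  obtain ⟨ε, hεpos, hball2⟩ := Metric.eventually_nhds_iff_ball.mp (ev5.and evI)
  have hball2' : ∀ t ∈ Set.Ioo (-ε) ε, (∀ j : Fin p, g j xs = 0 → fderiv ℝ (g j) xs d < 0 →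
      fderiv ℝ (g j) (ξ t) (deriv ξ t) < 0) ∧ t ∈ I := by
    intro t ht
    apply hball2
    rw [Real.ball_eq_Ioo]; simpa using ht
  refine ⟨ε, hεpos, ξ, ?_, hξ0, hξderiv, ?_, ?_⟩
  · exact hξI.mono (fun t ht => (hball2' t ht).2)
  · intro t ht
    have htI : t ∈ I := (hball2' t ht).2
    exact ⟨fun i => hzeroI (Sum.inl i) t htI,
      fun j hj1 hj2 => hzeroI (Sum.inr ⟨j, hj1, hj2⟩) t htI⟩
  · intro t ht j
    have htI' : t ∈ Set.Ioo (-ε) ε := by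
      constructor
      · linarith [ht.1, hεpos]
      · exact ht.2
    have htI : t ∈ I := (hball2' t htI').2
    rcases lt_or_eq_of_le (hfeas_g j) with hneg | hzero
    · exact (hIneg t htI j hneg).le
    · rcases lt_or_eq_of_le (hdg j hzero) with hd2 | hd0
      · rcases eq_or_lt_of_le ht.1 with h0 | h0
        · rw [← h0, hξ0, hzero]
        · have hIcc : Set.Icc (0 : ℝ) t ⊆ Set.Ioo (-ε) ε := by
            intro s hs
            constructor
            · linarith [hs.1]
            · exact lt_of_le_of_lt hs.2 ht.2
          have hIccI : Set.Icc (0 : ℝ) t ⊆ I := fun s hs => (hball2' s (hIcc hs)).2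
          have hcont : ContinuousOn (fun s => g j (ξ s)) (Set.Icc 0 t) :=
            (hg j).continuous.comp_continuousOn (hξcontI.mono hIccI)
          have hderivneg : ∀ s ∈ interior (Set.Icc (0 : ℝ) t),
              deriv (fun s' => g j (ξ s')) s < 0 := by
            intro s hs
            rw [interior_Icc] at hs
            have hsIoo : s ∈ Set.Ioo (-ε) ε := hIcc ⟨hs.1.le, hs.2.le⟩
            have hsI : s ∈ I := (hball2' s hsIoo).2
            have hds : HasDerivAt (fun s' => g j (ξ s'))
                (fderiv ℝ (g j) (ξ s) (deriv ξ s)) s :=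
              (((hg j).differentiable two_ne_zero (ξ s)).hasFDerivAt).comp_hasDerivAt s
                (hξdiffI s hsI)
            rw [hds.deriv]
            exact (hball2' s hsIoo).1 j hzero hd2
          have hanti := strictAntiOn_of_deriv_neg (convex_Icc (0 : ℝ) t) hcont hderivneg
          have hlt : g j (ξ t) < g j (ξ 0) :=
            hanti (Set.left_mem_Icc.mpr h0.le) (Set.right_mem_Icc.mpr h0.le) h0
          rw [hξ0, hzero] at hlt
          exact hlt.le
      · exact (hzeroI (Sum.inr ⟨j, hzero, hd0⟩) t htI).le
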